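/- Let σ be a finite signed measure on ℝ and u* > 0, x < 0. Then |(i/√(x+i)) ∫_{u*}^∞ cos(u√λ) e^{iu√(x+i)} du| ≤ C exp(−u* √|x|/2) uniformly over λ in the support region λ ≥ x/4, for x ≤ x₀ < 0 and a constant C depending only on x₀. -/

import Mathlib

open Complex MeasureTheory Real

lemma my_integral_exp_neg_mul_Ioi {b : ℝ} (hb : 0 < b) (a : ℝ) :
    ∫ u in Set.Ioi a, Real.exp (-b * u) = Real.exp (-b * a) / b := by
  have hd : ∀ u ∈ Set.Ioi a, HasDerivAt (fun v => -Real.exp (-b * v) / b)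
      (Real.exp (-b * u)) u := by
    intro u _
    simpa [hb.ne', neg_mul, mul_comm] using
      (((hasDerivAt_id u).const_mul b).neg.exp.neg.div_const b)
  have htend : Filter.Tendsto (fun v => -Real.exp (-b * v) / b) Filter.atTop (nhds 0) := by
    have : Filter.Tendsto (fun v : ℝ => -Real.exp (-b * v) / b) Filter.atTop (nhds (-0 / b)) := by
      refine Filter.Tendsto.div_const (Filter.Tendsto.neg ?_) _
      exact Real.tendsto_exp_atBot.comp (Filter.tendsto_id.const_mul_atTop_of_neg (by linarith))
    simpa using this
  have hcont : ContinuousWithinAt (fun v => -Real.exp (-b * v) / b) (Set.Ici a) a := by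
    exact Continuous.continuousWithinAt (by fun_prop)
  rw [MeasureTheory.integral_Ioi_of_hasDerivAt_of_tendsto hcont hd
    (exp_neg_integrableOn_Ioi a hb) htend]
  ring

lemma my_norm_cos_le (z : ℂ) : ‖Complex.cos z‖ ≤ Real.exp |z.im| := by
  have h1 : ‖Complex.exp (z * Complex.I)‖ = Real.exp (-z.im) := by
    rw [Complex.norm_exp]; simp [Complex.mul_re]
  have h2 : ‖Complex.exp (-z * Complex.I)‖ = Real.exp z.im := by
    rw [Complex.norm_exp]; simp [Complex.mul_re]
  have hle : ‖Complex.cos z‖ ≤ (Real.exp (-z.im) + Real.exp z.im) / 2 := by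
    rw [Complex.cos, norm_div]
    rw [show ‖(2:ℂ)‖ = 2 by norm_num, ← h1, ← h2]
    gcongr
    exact norm_add_le _ _
  refine hle.trans ?_
  have e1 : Real.exp (-z.im) ≤ Real.exp |z.im| := Real.exp_le_exp.2 (neg_le_abs _)
  have e2 : Real.exp z.im ≤ Real.exp |z.im| := Real.exp_le_exp.2 (le_abs_self _)
  linarith

theorem tail_integral_estimate (x₀ : ℝ) (hx₀ : x₀ < 0) :
    ∃ C > (0 : ℝ), ∀ x ≤ x₀, ∀ lam : ℝ, x / 4 ≤ lam → ∀ ustar > (0 : ℝ),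
      ‖Complex.I / (((x : ℂ) + Complex.I) ^ (1/2 : ℂ))
          * ∫ u in Set.Ioi ustar,
              Complex.cos (u * ((lam : ℂ) ^ (1/2 : ℂ)))
                * Complex.exp (Complex.I * u * (((x : ℂ) + Complex.I) ^ (1/2 : ℂ)))‖
        ≤ C * Real.exp (-ustar * Real.sqrt |x| / 2) := by
  have hsq0 : 0 < Real.sqrt (-x₀) := Real.sqrt_pos.2 (by linarith)
  refine ⟨2 / (Real.sqrt (-x₀) * Real.sqrt (-x₀)), by positivity, ?_⟩
  intro x hx lam hlam ustar hustar
  have hxneg : x < 0 := lt_of_le_of_lt hx hx₀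
  have habs : |x| = -x := abs_of_neg hxneg
  set s : ℂ := ((x : ℂ) + Complex.I) ^ (1/2 : ℂ) with hs
  set t : ℂ := (lam : ℂ) ^ (1/2 : ℂ) with ht
  -- s ^ 2 = x + i
  have hsq : s ^ 2 = (x : ℂ) + Complex.I := by
    rw [hs, show (1/2 : ℂ) = ((2 : ℕ) : ℂ)⁻¹ by norm_num]
    exact Complex.cpow_nat_inv_pow _ two_ne_zero
  have hz : ((x : ℂ) + Complex.I) ≠ 0 := by
    intro h
    have := congrArg Complex.im h
    simp at this
  -- s.im ≥ 0
  have hsim0 : 0 ≤ s.im := by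
    have hhalf : (1/2 : ℂ) = ((1/2 : ℝ) : ℂ) := by norm_num
    have h1 : 0 ≤ Complex.arg ((x : ℂ) + Complex.I) := Complex.arg_nonneg_iff.2 (by simp)
    have h2 := Complex.arg_le_pi ((x : ℂ) + Complex.I)
    rw [hs, Complex.cpow_def_of_ne_zero hz, Complex.exp_im, hhalf]
    apply mul_nonneg (Real.exp_pos _).le
    apply Real.sin_nonneg_of_nonneg_of_le_pi
    · simp only [Complex.mul_im, Complex.log_im, Complex.ofReal_im, Complex.ofReal_re,
        mul_zero, zero_add]
      positivity
    · simp only [Complex.mul_im, Complex.log_im, Complex.ofReal_im, Complex.ofReal_re,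
        mul_zero, zero_add]
      nlinarith [Real.pi_pos]
  -- Im s ≥ sqrt(-x)
  have hre_sq : (s ^ 2).re = x := by rw [hsq]; simp
  have him2 : s.im ^ 2 = s.re ^ 2 - x := by
    have hmm : (s * s).re = x := by rw [← sq, hsq]; simp
    rw [Complex.mul_re] at hmm
    have e1 : s.im ^ 2 = s.im * s.im := sq s.im
    have e2 : s.re ^ 2 = s.re * s.re := sq s.re
    linarith
  have hsim : Real.sqrt (-x) ≤ s.im := by
    have h2 : -x ≤ s.im ^ 2 := by nlinarith [sq_nonneg s.re]
    calc Real.sqrt (-x) ≤ Real.sqrt (s.im ^ 2) := Real.sqrt_le_sqrt h2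
      _ = |s.im| := Real.sqrt_sq_eq_abs _
      _ = s.im := abs_of_nonneg hsim0
  -- ‖s‖ ≥ sqrt(-x₀)
  have hnorms : Real.sqrt (-x₀) ≤ ‖s‖ := by
    have hns : ‖s‖ ^ 2 = ‖(x : ℂ) + Complex.I‖ := by rw [← norm_pow, hsq]
    have hge : -x₀ ≤ ‖s‖ ^ 2 := by
      rw [hns]
      calc -x₀ ≤ -x := by linarith
        _ = |(((x : ℂ) + Complex.I)).re| := by simp [abs_of_neg hxneg]
        _ ≤ ‖(x : ℂ) + Complex.I‖ := Complex.abs_re_le_norm _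
    calc Real.sqrt (-x₀) ≤ Real.sqrt (‖s‖ ^ 2) := Real.sqrt_le_sqrt hge
      _ = |‖s‖| := Real.sqrt_sq_eq_abs _
      _ = ‖s‖ := abs_of_nonneg (norm_nonneg _)
  -- |Im t| ≤ sqrt(-x)/2
  have htim : |t.im| ≤ Real.sqrt (-x) / 2 := by
    have hx4 : 0 ≤ Real.sqrt (-x) / 2 := by positivity
    rcases le_or_gt 0 lam with h | h
    · have heq : t = ((lam ^ ((1:ℝ)/2) : ℝ) : ℂ) := by
        rw [ht, Complex.ofReal_cpow h]
        norm_num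
      rw [heq]
      simpa using hx4
    · have hne : (lam : ℂ) ≠ 0 := Complex.ofReal_ne_zero.2 (ne_of_lt h)
      have habt : ‖t‖ = Real.sqrt (-lam) := by
        rw [ht, show (1/2 : ℂ) = (((1:ℝ)/2 : ℝ) : ℂ) by norm_num,
          Complex.norm_cpow_of_ne_zero hne]
        simp only [Complex.ofReal_re, Complex.ofReal_im, mul_zero, Real.exp_zero, div_one]
        rw [Complex.norm_real, Real.norm_eq_abs, abs_of_neg h, Real.sqrt_eq_rpow]
      calc |t.im| ≤ ‖t‖ := Complex.abs_im_le_norm t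
        _ = Real.sqrt (-lam) := habt
        _ ≤ Real.sqrt (-x / 4) := Real.sqrt_le_sqrt (by linarith)
        _ = Real.sqrt (-x) / 2 := by
            rw [Real.sqrt_div (by linarith : (0:ℝ) ≤ -x) 4,
              show Real.sqrt 4 = 2 by
                rw [show (4:ℝ) = 2 ^ 2 by norm_num, Real.sqrt_sq (by norm_num : (0:ℝ) ≤ 2)]]
  -- pointwise bound
  set b : ℝ := Real.sqrt (-x) / 2 with hbdef
  have hb : 0 < b := by
    have h0 : 0 < Real.sqrt (-x) := Real.sqrt_pos.2 (by linarith)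
    rw [hbdef]; positivity
  have key : ∀ u ∈ Set.Ioi ustar,
      ‖Complex.cos (u * t) * Complex.exp (Complex.I * u * s)‖ ≤ Real.exp (-b * u) := by
    intro u hu
    have hu0 : 0 ≤ u := le_of_lt (lt_trans hustar hu)
    rw [norm_mul]
    have h1 : ‖Complex.cos ((u : ℂ) * t)‖ ≤ Real.exp (u * b) := by
      refine (my_norm_cos_le _).trans (Real.exp_le_exp.2 ?_)
      have himeq : ((u : ℂ) * t).im = u * t.im := by
        simp [Complex.mul_im]
      rw [himeq, abs_mul, _root_.abs_of_nonneg hu0, hbdef]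
      exact mul_le_mul_of_nonneg_left htim hu0
    have h2 : ‖Complex.exp (Complex.I * u * s)‖ = Real.exp (-(u * s.im)) := by
      rw [Complex.norm_exp]
      congr 1
      simp [Complex.mul_re, Complex.mul_im]
    rw [h2]
    calc ‖Complex.cos ((u:ℂ) * t)‖ * Real.exp (-(u * s.im))
        ≤ Real.exp (u * b) * Real.exp (-(u * s.im)) := by
          gcongr
      _ = Real.exp (u * b - u * s.im) := by rw [← Real.exp_add]; ring_nf
      _ ≤ Real.exp (-b * u) := by
          apply Real.exp_le_exp.2
          have h3 : u * Real.sqrt (-x) ≤ u * s.im := mul_le_mul_of_nonneg_left hsim hu0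
          rw [hbdef]
          linarith
  have hIntBound : ‖∫ u in Set.Ioi ustar, Complex.cos (u * t) * Complex.exp (Complex.I * u * s)‖
      ≤ Real.exp (-b * ustar) / b := by
    calc ‖∫ u in Set.Ioi ustar, Complex.cos (u * t) * Complex.exp (Complex.I * u * s)‖
        ≤ ∫ u in Set.Ioi ustar, ‖Complex.cos (u * t) * Complex.exp (Complex.I * u * s)‖ :=
          norm_integral_le_integral_norm _
      _ ≤ ∫ u in Set.Ioi ustar, Real.exp (-b * u) := by
          apply integral_mono_of_nonneg
          · exact Filter.Eventually.of_forall fun u => norm_nonneg _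
          · exact exp_neg_integrableOn_Ioi ustar hb
          · exact (ae_restrict_iff' measurableSet_Ioi).2 (Filter.Eventually.of_forall key)
      _ = Real.exp (-b * ustar) / b := my_integral_exp_neg_mul_Ioi hb ustar
  rw [norm_mul, norm_div]
  have hexp : Real.exp (-ustar * Real.sqrt |x| / 2) = Real.exp (-b * ustar) := by
    rw [habs, hbdef]; ring_nf
  rw [hexp]
  have hA : ‖Complex.I‖ / ‖s‖ ≤ 1 / Real.sqrt (-x₀) := by
    rw [Complex.norm_I]
    exact one_div_le_one_div_of_le hsq0 hnorms
  have hbge : Real.sqrt (-x₀) / 2 ≤ b := by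
    rw [hbdef]
    have := Real.sqrt_le_sqrt (show -x₀ ≤ -x by linarith)
    linarith
  have hB : Real.exp (-b * ustar) / b ≤ Real.exp (-b * ustar) * (2 / Real.sqrt (-x₀)) := by
    rw [div_eq_mul_inv]
    refine mul_le_mul_of_nonneg_left ?_ (Real.exp_pos _).le
    calc b⁻¹ ≤ (Real.sqrt (-x₀) / 2)⁻¹ := inv_anti₀ (by positivity) hbge
      _ = 2 / Real.sqrt (-x₀) := by rw [inv_div]
  calc ‖Complex.I‖ / ‖s‖
        * ‖∫ u in Set.Ioi ustar, Complex.cos (u * t) * Complex.exp (Complex.I * u * s)‖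
      ≤ (1 / Real.sqrt (-x₀)) * (Real.exp (-b * ustar) * (2 / Real.sqrt (-x₀))) :=
        mul_le_mul hA (hIntBound.trans hB) (norm_nonneg _) (by positivity)
    _ = 2 / (Real.sqrt (-x₀) * Real.sqrt (-x₀)) * Real.exp (-b * ustar) := by
        field_simp
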